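/- Let m ∈ ℕ and for each i ∈ {1,…,m} let (I_i, 𝓘_i) be a non-empty measurable space with a preorder ≤_i whose triangular set Δ_i = {(t_i,s_i) : s_i ≤_i t_i} belongs to 𝓘_i ⊗ 𝓘_i. Equip I = I_1 × ⋯ × I_m with the product σ-field 𝓘 = 𝓘_1 ⊗ ⋯ ⊗ 𝓘_m and the componentwise preorder (s ≤ t iff s_i ≤_i t_i for all i). Let μ be a σ-finite measure on 𝓘 and k a non-negative kernel on I, and for each i let μ_i be a σ-finite measure on 𝓘_i and k_i a non-negative kernel on I_i, such that μ ≤ μ_1 ⊗ ⋯ ⊗ μ_m and k(t,s) ≤ k_1(t_1,s_1) ⋯ k_m(t_m,s_m) for all s ≤ t. Then for all n ∈ ℕ and s ≤ t in I: R_{k,μ,n}(t,s) ≤ R_{k_1,μ_1,n}(t_1,s_1) ⋯ R_{k_m,μ_m,n}(t_m,s_m). Moreover, for p ≥ 1 and every t ∈ I: I_{k,μ,p}(t) ≤ Σ_{n=1}^∞ Π_{i=1}^m (∫_{I_i(t_i)} R_{k_i^p,μ_i,n}(t_i,s_i) μ_i(ds_i))^{1/p} ≤ Π_{i=1}^m I_{k_i,μ_i,p}(t_i).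 If μ = μ_1 ⊗ ⋯ ⊗ μ_m and k(t,s) = k_1(t_1,s_1) ⋯ k_m(t_m,s_m) for all s ≤ t, then the bound on R_{k,μ,n} and the first inequality for I_{k,μ,p}(t) are equalities. -/

import Mathlib

open MeasureTheory ENNReal

/-- The resolvent sequence of a non-negative kernel `k` with respect to a measure `μ`:
`res r μ k 0 = k` corresponds to `R_{k,μ,1}` and
`res r μ k (n+1) t s = ∫_{[s,t]} k t u * res r μ k n u s ∂μ` corresponds to `R_{k,μ,n+2}`. -/
noncomputable def res {I : Type*} [MeasurableSpace I] (r : I → I → Prop)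
    (μ : Measure I) (k : I → I → ℝ≥0∞) : ℕ → I → I → ℝ≥0∞
  | 0, t, s => k t s
  | n + 1, t, s => ∫⁻ u in {u : I | r s u ∧ r u t}, k t u * res r μ k n u s ∂μ

section Helpers

variable {α : Type*} [MeasurableSpace α] [Preorder α]

lemma up_meas (hΔ : MeasurableSet {q : α × α | q.2 ≤ q.1}) (a : α) :
    MeasurableSet {u : α | a ≤ u} :=
  hΔ.preimage (measurable_id.prodMk measurable_const)

lemma down_meas (hΔ : MeasurableSet {q : α × α | q.2 ≤ q.1}) (b : α) :
    MeasurableSet {u : α | u ≤ b} :=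
  hΔ.preimage (measurable_const.prodMk measurable_id)

lemma sect_meas (hΔ : MeasurableSet {q : α × α | q.2 ≤ q.1}) (a b : α) :
    MeasurableSet {u : α | a ≤ u ∧ u ≤ b} :=
  (up_meas hΔ a).inter (down_meas hΔ b)

noncomputable def kext (k : α → α → ℝ≥0∞) : α → α → ℝ≥0∞ :=
  fun t s => Function.extend (Subtype.val : {q : α × α // q.2 ≤ q.1} → α × α)
    (fun q => k q.1.1 q.1.2) (fun _ => 0) (t, s)

lemma kext_meas (hΔ : MeasurableSet {q : α × α | q.2 ≤ q.1}) {k : α → α → ℝ≥0∞}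
    (hk : Measurable fun q : {q : α × α // q.2 ≤ q.1} => k q.1.1 q.1.2) :
    Measurable fun q : α × α => kext k q.1 q.2 := by
  have h := (MeasurableEmbedding.subtype_coe hΔ).measurable_extend hk
    (measurable_const : Measurable fun _ : α × α => (0 : ℝ≥0∞))
  simpa [kext] using h

lemma kext_eq {k : α → α → ℝ≥0∞} {s t : α} (hst : s ≤ t) : kext k t s = k t s := by
  have : (t, s) = (Subtype.val (⟨(t, s), hst⟩ : {q : α × α // q.2 ≤ q.1})) := rfl
  rw [kext, this, Subtype.val_injective.extend_apply]

lemma res_congr (hΔ : MeasurableSet {q : α × α | q.2 ≤ q.1}) (μ : Measure α)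
    {k k' : α → α → ℝ≥0∞} (h : ∀ s t : α, s ≤ t → k t s = k' t s) :
    ∀ (n : ℕ) (s t : α), s ≤ t →
      res (· ≤ ·) μ k n t s = res (· ≤ ·) μ k' n t s := by
  intro n
  induction n with
  | zero => exact h
  | succ n ih =>
    intro s t hst
    simp only [res]
    refine setLIntegral_congr_fun (sect_meas hΔ s t) (fun u hu => ?_)
    rw [h u t hu.2, ih s u hu.1]

lemma res_meas (hΔ : MeasurableSet {q : α × α | q.2 ≤ q.1}) (μ : Measure α) [SigmaFinite μ]
    {k : α → α → ℝ≥0∞} (hk : Measurable fun q : α × α => k q.1 q.2) :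
    ∀ n : ℕ, Measurable fun q : α × α => res (· ≤ ·) μ k n q.1 q.2 := by
  intro n
  induction n with
  | zero => exact hk
  | succ n ih =>
    have hS : MeasurableSet {p : (α × α) × α | p.1.2 ≤ p.2 ∧ p.2 ≤ p.1.1} :=
      (hΔ.preimage (measurable_snd.prodMk measurable_fst.snd)).inter
        (hΔ.preimage (measurable_fst.fst.prodMk measurable_snd))
    have hmul : Measurable fun p : (α × α) × α =>
        k p.1.1 p.2 * res (· ≤ ·) μ k n p.2 p.1.2 :=
      (hk.comp (measurable_fst.fst.prodMk measurable_snd)).mul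
        (ih.comp (measurable_snd.prodMk measurable_fst.snd))
    have key : (fun q : α × α => res (· ≤ ·) μ k (n + 1) q.1 q.2)
        = fun q : α × α => ∫⁻ u,
            Set.indicator {p : (α × α) × α | p.1.2 ≤ p.2 ∧ p.2 ≤ p.1.1}
              (fun p => k p.1.1 p.2 * res (· ≤ ·) μ k n p.2 p.1.2) (q, u) ∂μ := by
      funext q
      simp only [res]
      rw [← lintegral_indicator (sect_meas hΔ q.2 q.1)]
      refine lintegral_congr fun u => ?_
      by_cases h : q.2 ≤ u ∧ u ≤ q.1 <;> simp [Set.indicator, h]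
    rw [key]
    exact Measurable.lintegral_prod_right' (hmul.indicator hS)

end Helpers

universe u

lemma lintegral_pi_prod : ∀ {m : ℕ} {I : Fin m → Type u} [∀ i, MeasurableSpace (I i)]
    (μ : ∀ i, Measure (I i)) [∀ i, SigmaFinite (μ i)]
    (f : ∀ i, I i → ℝ≥0∞) (_ : ∀ i, Measurable (f i)),
    ∫⁻ x, ∏ i, f i (x i) ∂Measure.pi μ = ∏ i, ∫⁻ xi, f i xi ∂μ i := by
  intro m
  induction m with
  | zero =>
    intro I _ μ _ f hf
    simp [lintegral_const, Measure.pi_empty_univ]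
  | succ n ih =>
    intro I _ μ _ f hf
    have hmp := measurePreserving_piFinSuccAbove μ 0
    have htail : Measurable fun y : ∀ j, I (Fin.succAbove 0 j) =>
        ∏ j, f (Fin.succAbove 0 j) (y j) :=
      Finset.measurable_prod _ fun j _ => (hf _).comp (measurable_pi_apply j)
    have hg : Measurable fun y : I 0 × ∀ j, I (Fin.succAbove 0 j) =>
        f 0 y.1 * ∏ j, f (Fin.succAbove 0 j) (y.2 j) :=
      ((hf 0).comp measurable_fst).mul (htail.comp measurable_snd)
    have key : ∫⁻ x, ∏ i, f i (x i) ∂Measure.pi μ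
        = ∫⁻ y : I 0 × ∀ j, I (Fin.succAbove 0 j),
            f 0 y.1 * ∏ j, f (Fin.succAbove 0 j) (y.2 j)
            ∂((μ 0).prod (Measure.pi fun j => μ (Fin.succAbove 0 j))) := by
      rw [← hmp.lintegral_comp hg]
      refine lintegral_congr fun x => ?_
      rw [Fin.prod_univ_succAbove (fun i => f i (x i)) 0]
      simp [MeasurableEquiv.piFinSuccAbove, Fin.tail, Fin.consEquiv]
      rfl
    rw [key, lintegral_prod_mul (hf 0).aemeasurable htail.aemeasurable,
      ih (fun j => μ (Fin.succAbove 0 j)) _ (fun j => hf _),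
      Fin.prod_univ_succAbove (fun i => ∫⁻ xi, f i xi ∂μ i) 0]

lemma setLIntegral_pi_prod {m : ℕ} {I : Fin m → Type u} [∀ i, MeasurableSpace (I i)]
    (μ : ∀ i, Measure (I i)) [∀ i, SigmaFinite (μ i)]
    (f : ∀ i, I i → ℝ≥0∞) (hf : ∀ i, Measurable (f i))
    (S : ∀ i, Set (I i)) (hS : ∀ i, MeasurableSet (S i)) :
    ∫⁻ x in Set.pi Set.univ S, ∏ i, f i (x i) ∂Measure.pi μ
      = ∏ i, ∫⁻ xi in S i, f i xi ∂μ i := by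
  rw [← lintegral_indicator (MeasurableSet.univ_pi hS)]
  have hind : ∀ x : ∀ i, I i, Set.indicator (Set.pi Set.univ S) (fun x => ∏ i, f i (x i)) x
      = ∏ i, Set.indicator (S i) (f i) (x i) := by
    intro x
    by_cases hx : x ∈ Set.pi Set.univ S
    · rw [Set.indicator_of_mem hx]
      exact Finset.prod_congr rfl fun i _ =>
        (Set.indicator_of_mem (hx i (Set.mem_univ i)) _).symm
    · rw [Set.indicator_of_notMem hx]
      rw [Set.mem_univ_pi] at hx
      push_neg at hx
      obtain ⟨j, hj⟩ := hx
      exact (Finset.prod_eq_zero (Finset.mem_univ j) (Set.indicator_of_notMem hj _)).symm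
    
  calc ∫⁻ x, Set.indicator (Set.pi Set.univ S) (fun x => ∏ i, f i (x i)) x ∂Measure.pi μ
      = ∫⁻ x, ∏ i, Set.indicator (S i) (f i) (x i) ∂Measure.pi μ := lintegral_congr hind
    _ = ∏ i, ∫⁻ xi, Set.indicator (S i) (f i) xi ∂μ i :=
        lintegral_pi_prod μ _ fun i => (hf i).indicator (hS i)
    _ = ∏ i, ∫⁻ xi in S i, f i xi ∂μ i :=
        Finset.prod_congr rfl fun i _ => lintegral_indicator (hS i) _

lemma tsum_prod_le_prod_tsum {m : ℕ} (hm : 0 < m) (a : ℕ → Fin m → ℝ≥0∞) :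
    ∑' n : ℕ, ∏ i, a n i ≤ ∏ i, ∑' n : ℕ, a n i := by
  have key : ∀ (s : Finset (Fin m)), s.Nonempty →
      ∑' n : ℕ, ∏ i ∈ s, a n i ≤ ∏ i ∈ s, ∑' n : ℕ, a n i := by
    intro s hs
    induction hs using Finset.Nonempty.cons_induction with
    | singleton j => simp
    | cons j s hj hs ih =>
      simp only [Finset.prod_cons]
      calc ∑' n : ℕ, a n j * ∏ i ∈ s, a n i
          ≤ ∑' n : ℕ, (∑' l : ℕ, a l j) * ∏ i ∈ s, a n i :=
            ENNReal.tsum_le_tsum fun n => mul_le_mul_left (ENNReal.le_tsum n) _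
        _ = (∑' l : ℕ, a l j) * ∑' n : ℕ, ∏ i ∈ s, a n i := ENNReal.tsum_mul_left
        _ ≤ (∑' l : ℕ, a l j) * ∏ i ∈ s, ∑' n : ℕ, a n i := mul_le_mul_right ih _
  haveI : Nonempty (Fin m) := Fin.pos_iff_nonempty.mp hm
  exact key Finset.univ Finset.univ_nonempty

section Main

variable {m : ℕ} {I : Fin m → Type u} [∀ i, MeasurableSpace (I i)] [∀ i, Preorder (I i)]

lemma triangle_pi_eq (t : ∀ i, I i) :
    {s : ∀ i, I i | s ≤ t} = Set.pi Set.univ fun i => {si : I i | si ≤ t i} := by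
  ext s; simp [Pi.le_def, Set.mem_pi]

lemma sect_pi_eq (s t : ∀ i, I i) :
    {u : ∀ i, I i | s ≤ u ∧ u ≤ t}
      = Set.pi Set.univ fun i => {ui : I i | s i ≤ ui ∧ ui ≤ t i} := by
  ext u
  simp only [Set.mem_setOf_eq, Set.mem_pi, Set.mem_univ, forall_true_left, Pi.le_def,
    ← forall_and]

lemma res_le_prod_aux (hΔ : ∀ i, MeasurableSet {q : I i × I i | q.2 ≤ q.1})
    (μ : Measure (∀ i, I i)) (μi : ∀ i, Measure (I i)) [∀ i, SigmaFinite (μi i)]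
    (hμ : μ ≤ Measure.pi μi)
    {k : (∀ i, I i) → (∀ i, I i) → ℝ≥0∞} {ki : ∀ i, I i → I i → ℝ≥0∞}
    (hKi : ∀ i, Measurable fun q : I i × I i => ki i q.1 q.2)
    (hkle : ∀ s t : ∀ i, I i, s ≤ t → k t s ≤ ∏ i, ki i (t i) (s i)) :
    ∀ (n : ℕ) (s t : ∀ i, I i), s ≤ t →
      res (· ≤ ·) μ k n t s ≤ ∏ i, res (· ≤ ·) (μi i) (ki i) n (t i) (s i) := by
  intro n
  induction n with
  | zero => exact hkle
  | succ n ih =>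
    intro s t hst
    have hSm : ∀ i, MeasurableSet {ui : I i | s i ≤ ui ∧ ui ≤ t i} :=
      fun i => sect_meas (hΔ i) _ _
    have hfm : ∀ i, Measurable fun ui : I i =>
        ki i (t i) ui * res (· ≤ ·) (μi i) (ki i) n ui (s i) := fun i =>
      ((hKi i).comp (measurable_const.prodMk measurable_id)).mul
        ((res_meas (hΔ i) (μi i) (hKi i) n).comp (measurable_id.prodMk measurable_const))
    calc res (· ≤ ·) μ k (n + 1) t s
        = ∫⁻ u in {u | s ≤ u ∧ u ≤ t}, k t u * res (· ≤ ·) μ k n u s ∂μ := by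
          simp only [res]
      _ ≤ ∫⁻ u in {u | s ≤ u ∧ u ≤ t},
            ∏ i, (ki i (t i) (u i) * res (· ≤ ·) (μi i) (ki i) n (u i) (s i)) ∂μ := by
          refine setLIntegral_mono' ?_ fun u hu => ?_
          · rw [sect_pi_eq]; exact MeasurableSet.univ_pi hSm
          · rw [Finset.prod_mul_distrib]
            exact mul_le_mul' (hkle u t hu.2) (ih s u hu.1)
      _ ≤ ∫⁻ u in {u | s ≤ u ∧ u ≤ t},
            ∏ i, (ki i (t i) (u i) * res (· ≤ ·) (μi i) (ki i) n (u i) (s i))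
            ∂Measure.pi μi :=
          lintegral_mono' (Measure.restrict_mono (Set.Subset.refl _) hμ) le_rfl
      _ = ∏ i, ∫⁻ ui in {ui : I i | s i ≤ ui ∧ ui ≤ t i},
            ki i (t i) ui * res (· ≤ ·) (μi i) (ki i) n ui (s i) ∂μi i := by
          rw [sect_pi_eq]
          exact setLIntegral_pi_prod μi _ hfm _ hSm
      _ = ∏ i, res (· ≤ ·) (μi i) (ki i) (n + 1) (t i) (s i) := by simp only [res]

lemma res_eq_prod_aux (hΔ : ∀ i, MeasurableSet {q : I i × I i | q.2 ≤ q.1})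
    (μi : ∀ i, Measure (I i)) [∀ i, SigmaFinite (μi i)]
    {k : (∀ i, I i) → (∀ i, I i) → ℝ≥0∞} {ki : ∀ i, I i → I i → ℝ≥0∞}
    (hKi : ∀ i, Measurable fun q : I i × I i => ki i q.1 q.2)
    (hkeq : ∀ s t : ∀ i, I i, s ≤ t → k t s = ∏ i, ki i (t i) (s i)) :
    ∀ (n : ℕ) (s t : ∀ i, I i), s ≤ t →
      res (· ≤ ·) (Measure.pi μi) k n t s
        = ∏ i, res (· ≤ ·) (μi i) (ki i) n (t i) (s i) := by
  intro n
  induction n with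
  | zero => exact hkeq
  | succ n ih =>
    intro s t hst
    have hSm : ∀ i, MeasurableSet {ui : I i | s i ≤ ui ∧ ui ≤ t i} :=
      fun i => sect_meas (hΔ i) _ _
    have hfm : ∀ i, Measurable fun ui : I i =>
        ki i (t i) ui * res (· ≤ ·) (μi i) (ki i) n ui (s i) := fun i =>
      ((hKi i).comp (measurable_const.prodMk measurable_id)).mul
        ((res_meas (hΔ i) (μi i) (hKi i) n).comp (measurable_id.prodMk measurable_const))
    calc res (· ≤ ·) (Measure.pi μi) k (n + 1) t s
        = ∫⁻ u in {u | s ≤ u ∧ u ≤ t},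
            k t u * res (· ≤ ·) (Measure.pi μi) k n u s ∂Measure.pi μi := by
          simp only [res]
      _ = ∫⁻ u in {u | s ≤ u ∧ u ≤ t},
            ∏ i, (ki i (t i) (u i) * res (· ≤ ·) (μi i) (ki i) n (u i) (s i))
            ∂Measure.pi μi := by
          refine setLIntegral_congr_fun ?_ (fun u hu => ?_)
          · rw [sect_pi_eq]; exact MeasurableSet.univ_pi hSm
          · rw [Finset.prod_mul_distrib, hkeq u t hu.2, ih s u hu.1]
      _ = ∏ i, ∫⁻ ui in {ui : I i | s i ≤ ui ∧ ui ≤ t i},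
            ki i (t i) ui * res (· ≤ ·) (μi i) (ki i) n ui (s i) ∂μi i := by
          rw [sect_pi_eq]
          exact setLIntegral_pi_prod μi _ hfm _ hSm
      _ = ∏ i, res (· ≤ ·) (μi i) (ki i) (n + 1) (t i) (s i) := by simp only [res]

lemma setlint_res_le (hΔ : ∀ i, MeasurableSet {q : I i × I i | q.2 ≤ q.1})
    (μ : Measure (∀ i, I i)) (μi : ∀ i, Measure (I i)) [∀ i, SigmaFinite (μi i)]
    (hμ : μ ≤ Measure.pi μi)
    {k : (∀ i, I i) → (∀ i, I i) → ℝ≥0∞} {ki : ∀ i, I i → I i → ℝ≥0∞}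
    (hKi : ∀ i, Measurable fun q : I i × I i => ki i q.1 q.2)
    (hkle : ∀ s t : ∀ i, I i, s ≤ t → k t s ≤ ∏ i, ki i (t i) (s i))
    (n : ℕ) (t : ∀ i, I i) :
    ∫⁻ s in {s : ∀ i, I i | s ≤ t}, res (· ≤ ·) μ k n t s ∂μ
      ≤ ∏ i, ∫⁻ si in {si : I i | si ≤ t i},
          res (· ≤ ·) (μi i) (ki i) n (t i) si ∂μi i := by
  have hSm : ∀ i, MeasurableSet {si : I i | si ≤ t i} := fun i => down_meas (hΔ i) _
  have hfm : ∀ i, Measurable fun si : I i => res (· ≤ ·) (μi i) (ki i) n (t i) si := fun i =>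
    (res_meas (hΔ i) (μi i) (hKi i) n).comp (measurable_const.prodMk measurable_id)
  calc ∫⁻ s in {s : ∀ i, I i | s ≤ t}, res (· ≤ ·) μ k n t s ∂μ
      ≤ ∫⁻ s in {s : ∀ i, I i | s ≤ t},
          ∏ i, res (· ≤ ·) (μi i) (ki i) n (t i) (s i) ∂μ := by
        refine setLIntegral_mono' ?_ fun s hs =>
          res_le_prod_aux hΔ μ μi hμ hKi hkle n s t hs
        rw [triangle_pi_eq]; exact MeasurableSet.univ_pi hSm
    _ ≤ ∫⁻ s in {s : ∀ i, I i | s ≤ t},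
          ∏ i, res (· ≤ ·) (μi i) (ki i) n (t i) (s i) ∂Measure.pi μi :=
        lintegral_mono' (Measure.restrict_mono (Set.Subset.refl _) hμ) le_rfl
    _ = ∏ i, ∫⁻ si in {si : I i | si ≤ t i},
          res (· ≤ ·) (μi i) (ki i) n (t i) si ∂μi i := by
        rw [triangle_pi_eq]
        exact setLIntegral_pi_prod μi _ hfm _ hSm

lemma setlint_res_eq (hΔ : ∀ i, MeasurableSet {q : I i × I i | q.2 ≤ q.1})
    (μi : ∀ i, Measure (I i)) [∀ i, SigmaFinite (μi i)]
    {k : (∀ i, I i) → (∀ i, I i) → ℝ≥0∞} {ki : ∀ i, I i → I i → ℝ≥0∞}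
    (hKi : ∀ i, Measurable fun q : I i × I i => ki i q.1 q.2)
    (hkeq : ∀ s t : ∀ i, I i, s ≤ t → k t s = ∏ i, ki i (t i) (s i))
    (n : ℕ) (t : ∀ i, I i) :
    ∫⁻ s in {s : ∀ i, I i | s ≤ t}, res (· ≤ ·) (Measure.pi μi) k n t s ∂Measure.pi μi
      = ∏ i, ∫⁻ si in {si : I i | si ≤ t i},
          res (· ≤ ·) (μi i) (ki i) n (t i) si ∂μi i := by
  have hSm : ∀ i, MeasurableSet {si : I i | si ≤ t i} := fun i => down_meas (hΔ i) _
  have hfm : ∀ i, Measurable fun si : I i => res (· ≤ ·) (μi i) (ki i) n (t i) si := fun i =>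
    (res_meas (hΔ i) (μi i) (hKi i) n).comp (measurable_const.prodMk measurable_id)
  calc ∫⁻ s in {s : ∀ i, I i | s ≤ t}, res (· ≤ ·) (Measure.pi μi) k n t s ∂Measure.pi μi
      = ∫⁻ s in {s : ∀ i, I i | s ≤ t},
          ∏ i, res (· ≤ ·) (μi i) (ki i) n (t i) (s i) ∂Measure.pi μi := by
        refine setLIntegral_congr_fun ?_ (fun s hs =>
          res_eq_prod_aux hΔ μi hKi hkeq n s t hs)
        rw [triangle_pi_eq]; exact MeasurableSet.univ_pi hSm
    _ = ∏ i, ∫⁻ si in {si : I i | si ≤ t i},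
          res (· ≤ ·) (μi i) (ki i) n (t i) si ∂μi i := by
        rw [triangle_pi_eq]
        exact setLIntegral_pi_prod μi _ hfm _ hSm

end Main


/-- **Kernels on Cartesian products** (Proposition 3 of the paper): if
`μ ≤ μ₁ ⊗ ⋯ ⊗ μ_m` and `k(t,s) ≤ k₁(t₁,s₁) ⋯ k_m(t_m,s_m)` on the triangular set,
then `R_{k,μ,n}(t,s) ≤ ∏ᵢ R_{kᵢ,μᵢ,n}(tᵢ,sᵢ)`, and for `p ≥ 1`
`I_{k,μ,p}(t) ≤ ∑_{n=1}^∞ ∏ᵢ (∫_{Iᵢ(tᵢ)} R_{kᵢ^p,μᵢ,n}(tᵢ,sᵢ) μᵢ(dsᵢ))^{1/p}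
  ≤ ∏ᵢ I_{kᵢ,μᵢ,p}(tᵢ)`; if both comparisons are equalities, the bound on the
resolvent sequence and the first series inequality are identities
(indices are shifted by one: `res … n = R_{·,n+1}`). -/
theorem kernels_on_cartesian_products {m : ℕ} (hm : 0 < m)
    {I : Fin m → Type*} [∀ i, MeasurableSpace (I i)] [∀ i, Preorder (I i)]
    [∀ i, Nonempty (I i)]
    (hΔ : ∀ i, MeasurableSet {q : I i × I i | q.2 ≤ q.1})
    (μ : Measure (∀ i, I i)) [SigmaFinite μ]
    (μi : ∀ i, Measure (I i)) [∀ i, SigmaFinite (μi i)]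
    (hμ : μ ≤ Measure.pi μi)
    (k : (∀ i, I i) → (∀ i, I i) → ℝ≥0∞)
    (hk : Measurable fun q : {q : (∀ i, I i) × (∀ i, I i) // q.2 ≤ q.1} => k q.1.1 q.1.2)
    (ki : ∀ i, I i → I i → ℝ≥0∞)
    (hki : ∀ i, Measurable fun q : {q : I i × I i // q.2 ≤ q.1} => ki i q.1.1 q.1.2)
    (hkle : ∀ s t : ∀ i, I i, s ≤ t → k t s ≤ ∏ i, ki i (t i) (s i))
    (p : ℝ) (hp : 1 ≤ p) :
    (∀ (n : ℕ) (s t : ∀ i, I i), s ≤ t →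
      res (· ≤ ·) μ k n t s ≤ ∏ i, res (· ≤ ·) (μi i) (ki i) n (t i) (s i)) ∧
    (∀ t : ∀ i, I i,
      (∑' n : ℕ,
        (∫⁻ s in {s : ∀ i, I i | s ≤ t},
          res (· ≤ ·) μ (fun a b => k a b ^ p) n t s ∂μ) ^ (1 / p))
        ≤ ∑' n : ℕ, ∏ i,
            (∫⁻ si in {si : I i | si ≤ t i},
              res (· ≤ ·) (μi i) (fun a b => ki i a b ^ p) n (t i) si ∂(μi i)) ^ (1 / p) ∧
      (∑' n : ℕ, ∏ i,
          (∫⁻ si in {si : I i | si ≤ t i},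
            res (· ≤ ·) (μi i) (fun a b => ki i a b ^ p) n (t i) si ∂(μi i)) ^ (1 / p))
        ≤ ∏ i, ∑' n : ℕ,
            (∫⁻ si in {si : I i | si ≤ t i},
              res (· ≤ ·) (μi i) (fun a b => ki i a b ^ p) n (t i) si ∂(μi i)) ^ (1 / p)) ∧
    (μ = Measure.pi μi → (∀ s t : ∀ i, I i, s ≤ t → k t s = ∏ i, ki i (t i) (s i)) →
      (∀ (n : ℕ) (s t : ∀ i, I i), s ≤ t →
        res (· ≤ ·) μ k n t s = ∏ i, res (· ≤ ·) (μi i) (ki i) n (t i) (s i)) ∧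
      (∀ t : ∀ i, I i,
        (∑' n : ℕ,
          (∫⁻ s in {s : ∀ i, I i | s ≤ t},
            res (· ≤ ·) μ (fun a b => k a b ^ p) n t s ∂μ) ^ (1 / p))
          = ∑' n : ℕ, ∏ i,
              (∫⁻ si in {si : I i | si ≤ t i},
                res (· ≤ ·) (μi i) (fun a b => ki i a b ^ p) n (t i) si ∂(μi i)) ^ (1 / p))) := by
  classical
  set Ki : ∀ i, I i → I i → ℝ≥0∞ := fun i => kext (ki i) with hKidef
  have hKim : ∀ i, Measurable fun q : I i × I i => Ki i q.1 q.2 :=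
    fun i => kext_meas (hΔ i) (hki i)
  have hKieq : ∀ (i) (a b : I i), a ≤ b → Ki i b a = ki i b a := fun i a b h => kext_eq h
  have hrescongr : ∀ (i) (n : ℕ) (a b : I i), a ≤ b →
      res (· ≤ ·) (μi i) (Ki i) n b a = res (· ≤ ·) (μi i) (ki i) n b a :=
    fun i => res_congr (hΔ i) (μi i) (hKieq i)
  have hp0 : (0 : ℝ) ≤ p := le_trans zero_le_one hp
  have hp0' : (0 : ℝ) ≤ 1 / p := by positivity
  have hkle' : ∀ s t : ∀ i, I i, s ≤ t → k t s ≤ ∏ i, Ki i (t i) (s i) := fun s t h =>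
    (hkle s t h).trans_eq (Finset.prod_congr rfl fun i _ => (hKieq i _ _ (h i)).symm)
  have part1 : ∀ (n : ℕ) (s t : ∀ i, I i), s ≤ t →
      res (· ≤ ·) μ k n t s ≤ ∏ i, res (· ≤ ·) (μi i) (ki i) n (t i) (s i) :=
    fun n s t hst => (res_le_prod_aux hΔ μ μi hμ hKim hkle' n s t hst).trans_eq
      (Finset.prod_congr rfl fun i _ => hrescongr i n (s i) (t i) (hst i))
  set Lp : ∀ i, I i → I i → ℝ≥0∞ := fun i a b => Ki i a b ^ p with hLpdef
  have hLpm : ∀ i, Measurable fun q : I i × I i => Lp i q.1 q.2 :=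
    fun i => (hKim i).pow_const p
  have hLpcongr : ∀ (i) (n : ℕ) (a b : I i), a ≤ b →
      res (· ≤ ·) (μi i) (Lp i) n b a
        = res (· ≤ ·) (μi i) (fun a b => ki i a b ^ p) n b a :=
    fun i => res_congr (hΔ i) (μi i) fun a b h => by
      simp only [hLpdef, hKieq i a b h]
  have hprodKi : ∀ s t : ∀ i, I i, s ≤ t →
      (∏ i, ki i (t i) (s i)) ^ p = ∏ i, Lp i (t i) (s i) := fun s t h => by
    calc (∏ i, ki i (t i) (s i)) ^ p
        = (∏ i, Ki i (t i) (s i)) ^ p := by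
          rw [Finset.prod_congr rfl fun i _ => (hKieq i _ _ (h i)).symm]
      _ = ∏ i, Ki i (t i) (s i) ^ p := (ENNReal.prod_rpow_of_nonneg hp0).symm
  have hkple : ∀ s t : ∀ i, I i, s ≤ t → k t s ^ p ≤ ∏ i, Lp i (t i) (s i) := fun s t h =>
    (ENNReal.rpow_le_rpow (hkle s t h) hp0).trans_eq (hprodKi s t h)
  have hAle : ∀ (n : ℕ) (t : ∀ i, I i),
      (∫⁻ s in {s : ∀ i, I i | s ≤ t}, res (· ≤ ·) μ (fun a b => k a b ^ p) n t s ∂μ)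
        ≤ ∏ i, ∫⁻ si in {si : I i | si ≤ t i},
            res (· ≤ ·) (μi i) (fun a b => ki i a b ^ p) n (t i) si ∂μi i := by
    intro n t
    refine (setlint_res_le hΔ μ μi hμ hLpm hkple n t).trans_eq
      (Finset.prod_congr rfl fun i _ => ?_)
    exact setLIntegral_congr_fun (down_meas (hΔ i) (t i))
      (fun si hsi => hLpcongr i n si (t i) hsi)
  refine ⟨part1, fun t => ⟨?_, ?_⟩, ?_⟩
  · refine ENNReal.tsum_le_tsum fun n => ?_
    exact (ENNReal.rpow_le_rpow (hAle n t) hp0').trans_eq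
      (ENNReal.prod_rpow_of_nonneg hp0').symm
  · exact tsum_prod_le_prod_tsum hm _
  · intro hμeq hkeq
    subst hμeq
    have hkeq' : ∀ s t : ∀ i, I i, s ≤ t → k t s = ∏ i, Ki i (t i) (s i) := fun s t h =>
      (hkeq s t h).trans (Finset.prod_congr rfl fun i _ => (hKieq i _ _ (h i)).symm)
    have hkpeq : ∀ s t : ∀ i, I i, s ≤ t → k t s ^ p = ∏ i, Lp i (t i) (s i) := fun s t h => by
      rw [hkeq s t h, hprodKi s t h]
    constructor
    · intro n s t hst
      exact (res_eq_prod_aux hΔ μi hKim hkeq' n s t hst).trans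
        (Finset.prod_congr rfl fun i _ => hrescongr i n (s i) (t i) (hst i))
    · intro t
      refine tsum_congr fun n => ?_
      rw [setlint_res_eq hΔ μi hLpm hkpeq n t, ← ENNReal.prod_rpow_of_nonneg hp0']
      refine Finset.prod_congr rfl fun i _ => ?_
      congr 1
      exact setLIntegral_congr_fun (down_meas (hΔ i) (t i))
        (fun si hsi => hLpcongr i n si (t i) hsi)
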